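/- In the Laurent polynomial ring Λ = ℂ[t_1^{±1}, …, t_5^{±1}], let Δ_1 = [(t_1−1)(t_2−1)(t_3−1)(t_4−1)(t_5−1)(t_1t_2t_3t_4t_5−1)(t_3t_4t_5−1)]² and Δ_2 = [(t_1−1)(t_2−1)(t_3−1)(t_4−1)]²(t_5−1)³(t_1t_2t_3t_4t_5−1)(t_3t_4t_5−1)(t_1t_2t_5−1). Then there is no monomial isomorphism of Λ carrying Δ_1 to Δ_2 up to units: for every group automorphism σ of ℤ^5, with induced ℂ-algebra automorphism σ_* of Λ determined by σ_*(t^a) = t^{σ(a)} for a ∈ ℤ^5, and for every unit u of Λ (i.e., u = c·t^a with c ∈ ℂ^× and a ∈ ℤ^5), one has σ_*(Δ_1) ≠ u·Δ_2. -/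

import Mathlib

/-- The Laurent polynomial ring `ℂ[t₁^{±1},…,t₅^{±1}]`. -/
abbrev LaurentRing5 := AddMonoidAlgebra ℂ (Fin 5 → ℤ)

/-- The monomial `t^a` in `ℂ[t₁^{±1},…,t₅^{±1}]`. -/
noncomputable abbrev lmon (a : Fin 5 → ℤ) : LaurentRing5 :=
  AddMonoidAlgebra.single a (1 : ℂ)

namespace Stmt10Aux

instance : IsDomain LaurentRing5 := NoZeroDivisors.to_isDomain _

lemma lmon_mul (a b : Fin 5 → ℤ) : lmon a * lmon b = lmon (a + b) := by
  rw [AddMonoidAlgebra.single_mul_single, one_mul]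

lemma lmon_ne_one {a : Fin 5 → ℤ} (h : a ≠ 0) : lmon a ≠ 1 := by
  rw [AddMonoidAlgebra.one_def, Ne, AddMonoidAlgebra.single_inj]
  simp [h]

lemma single_ne_zero (a : Fin 5 → ℤ) {c : ℂ} (h : c ≠ 0) :
    (AddMonoidAlgebra.single a c : LaurentRing5) ≠ 0 := by
  simpa [Finsupp.single_eq_zero] using h

/-- the fifth basis vector -/
noncomputable def e4 : Fin 5 → ℤ := Pi.single 4 1

/-- the prime element `t₅ - 1` -/
noncomputable def p : LaurentRing5 := lmon e4 - 1

/-- zeroing out the fifth coordinate -/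
def projm (a : Fin 5 → ℤ) : Fin 5 → ℤ := fun i => if i = 4 then 0 else a i

lemma projm_add (a b : Fin 5 → ℤ) : projm (a + b) = projm a + projm b := by
  funext i; by_cases h : i = 4 <;> simp [projm, h]

lemma projm_decomp (a : Fin 5 → ℤ) : a = projm a + (a 4) • e4 := by
  funext i; by_cases h : i = 4 <;> simp [projm, h, e4, Pi.single_apply]

/-- the substitution `t₅ ↦ 1` as a monoid hom on monomials -/
noncomputable def M : Multiplicative (Fin 5 → ℤ) →* LaurentRing5 where
  toFun a := lmon (projm (Multiplicative.toAdd a))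
  map_one' := by
    simpa [AddMonoidAlgebra.one_def] using congrArg lmon (by funext i; simp [projm])
  map_mul' a b := by
    simp only [toAdd_mul, projm_add, lmon_mul]

/-- the substitution `t₅ ↦ 1` as an algebra hom -/
noncomputable def ψ : LaurentRing5 →ₐ[ℂ] LaurentRing5 :=
  AddMonoidAlgebra.lift ℂ LaurentRing5 (Fin 5 → ℤ) M

lemma ψ_single (a : Fin 5 → ℤ) (c : ℂ) :
    ψ (AddMonoidAlgebra.single a c) = c • lmon (projm a) := by
  rw [ψ, AddMonoidAlgebra.lift_single]; rfl

lemma ψ_lmon (a : Fin 5 → ℤ) : ψ (lmon a) = lmon (projm a) := by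
  rw [ψ_single, one_smul]

lemma p_dvd_zpow (n : ℤ) : p ∣ lmon (n • e4) - 1 := by
  have hnat : ∀ m : ℕ, p ∣ lmon ((m : ℤ) • e4) - 1 := by
    intro m
    have h1 : lmon ((m : ℤ) • e4) = (lmon e4) ^ m := by
      rw [AddMonoidAlgebra.single_pow, one_pow, natCast_zsmul]
    have := sub_dvd_pow_sub_pow (lmon e4) 1 m
    rw [one_pow] at this
    rw [h1]; exact this
  obtain ⟨m, rfl | rfl⟩ := Int.eq_nat_or_neg n
  · exact hnat m
  · have hinv : lmon (-(m : ℤ) • e4) * lmon ((m : ℤ) • e4) = 1 := by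
      rw [lmon_mul]
      simp [AddMonoidAlgebra.one_def]
    have key : lmon (-(m : ℤ) • e4) - 1
        = -(lmon (-(m : ℤ) • e4)) * (lmon ((m : ℤ) • e4) - 1) := by
      have h := hinv
      ring_nf
      ring_nf at h
      rw [h]; ring
    rw [key]
    exact (hnat m).mul_left _

lemma p_dvd_sub_ψ (f : LaurentRing5) : p ∣ f - ψ f := by
  induction f using AddMonoidAlgebra.induction_on with
  | of a =>
      have hof : AddMonoidAlgebra.of ℂ (Fin 5 → ℤ) (Multiplicative.ofAdd a) = lmon a := rfl
      rw [hof, ψ_lmon]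
      have hdecomp : lmon a = lmon (projm a) * lmon ((a 4) • e4) := by
        rw [lmon_mul, ← projm_decomp]
      have : lmon a - lmon (projm a)
          = lmon (projm a) * (lmon ((a 4) • e4) - 1) := by
        rw [hdecomp]; ring
      rw [this]
      exact (p_dvd_zpow (a 4)).mul_left _
  | add f g hf hg =>
      have : (f + g) - ψ (f + g) = (f - ψ f) + (g - ψ g) := by
        rw [map_add]; ring
      rw [this]; exact dvd_add hf hg
  | smul r f hf =>
      have : r • f - ψ (r • f) = r • (f - ψ f) := by
        rw [map_smul, smul_sub]
      rw [this]
      obtain ⟨k, hk⟩ := hf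
      exact ⟨r • k, by rw [hk, mul_smul_comm]⟩

lemma ψ_p : ψ p = 0 := by
  have : projm e4 = 0 := by funext i; by_cases h : i = 4 <;> simp [projm, e4, Pi.single_apply, h]
  rw [p, map_sub, ψ_lmon, this, map_one]
  simp [AddMonoidAlgebra.one_def]

lemma not_dvd_of_ψ_ne {f : LaurentRing5} (h : ψ f ≠ 0) : ¬ p ∣ f := by
  rintro ⟨g, rfl⟩
  exact h (by rw [map_mul, ψ_p, zero_mul])

/-- the augmentation `tᵢ ↦ 1` -/
noncomputable def ε : LaurentRing5 →ₐ[ℂ] ℂ :=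
  AddMonoidAlgebra.lift ℂ ℂ (Fin 5 → ℤ) 1

lemma p_ne_zero : p ≠ 0 := by
  rw [p, sub_ne_zero]
  apply lmon_ne_one
  intro h
  have := congrFun h 4
  simp [e4] at this

lemma p_not_unit : ¬ IsUnit p := by
  intro h
  have h2 : IsUnit (ε p) := h.map ε
  have h3 : ε p = 0 := by
    rw [p, map_sub, map_one, ε, AddMonoidAlgebra.lift_single]
    simp
  rw [h3] at h2
  exact h2.ne_zero rfl

lemma p_prime : Prime p := by
  refine ⟨p_ne_zero, p_not_unit, fun f g hfg => ?_⟩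
  obtain ⟨h, hh⟩ := hfg
  have h0 : ψ f * ψ g = 0 := by
    rw [← map_mul, hh, map_mul, ψ_p, zero_mul]
  rcases mul_eq_zero.mp h0 with h | h
  · left
    have := p_dvd_sub_ψ f
    rw [h, sub_zero] at this; exact this
  · right
    have := p_dvd_sub_ψ g
    rw [h, sub_zero] at this; exact this


noncomputable def ee (i : Fin 5) : Fin 5 → ℤ := Pi.single i 1

noncomputable def A : LaurentRing5 :=
  (lmon (ee 0) - 1) * (lmon (ee 1) - 1) * (lmon (ee 2) - 1) * (lmon (ee 3) - 1)
noncomputable def B : LaurentRing5 := lmon (ee 0 + ee 1 + ee 2 + ee 3 + ee 4) - 1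
noncomputable def C : LaurentRing5 := lmon (ee 2 + ee 3 + ee 4) - 1
noncomputable def D : LaurentRing5 := lmon (ee 0 + ee 1 + ee 4) - 1
noncomputable def P1 : LaurentRing5 := A * (lmon (ee 4) - 1) * B * C

lemma ψ_factor_ne (b : Fin 5 → ℤ) (i : Fin 5) (hb : projm b i = 1) :
    ψ (lmon b - 1) ≠ 0 := by
  rw [map_sub, map_one, ψ_lmon]
  refine sub_ne_zero.mpr (lmon_ne_one fun h0 => ?_)
  rw [h0] at hb
  simp at hb

lemma hψA : ψ A ≠ 0 := by
  rw [A, map_mul, map_mul, map_mul]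
  have h0 : ψ (lmon (ee 0) - 1) ≠ 0 := ψ_factor_ne _ 0 (by simp [projm, ee])
  have h1 : ψ (lmon (ee 1) - 1) ≠ 0 := ψ_factor_ne _ 1 (by simp [projm, ee])
  have h2 : ψ (lmon (ee 2) - 1) ≠ 0 := ψ_factor_ne _ 2 (by simp [projm, ee])
  have h3 : ψ (lmon (ee 3) - 1) ≠ 0 := ψ_factor_ne _ 3 (by simp [projm, ee])
  exact mul_ne_zero (mul_ne_zero (mul_ne_zero h0 h1) h2) h3

lemma hψB : ψ B ≠ 0 := ψ_factor_ne _ 0 (by simp [projm, ee, Pi.single_apply])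
lemma hψC : ψ C ≠ 0 := ψ_factor_ne _ 2 (by simp [projm, ee, Pi.single_apply])
lemma hψD : ψ D ≠ 0 := ψ_factor_ne _ 0 (by simp [projm, ee, Pi.single_apply])

end Stmt10Aux

open Stmt10Aux in
theorem boundary_manifold_stmt10 :
    let e : Fin 5 → (Fin 5 → ℤ) := fun i => Pi.single i 1
    let Δ₁ : LaurentRing5 :=
      ((lmon (e 0) - 1) * (lmon (e 1) - 1) * (lmon (e 2) - 1) * (lmon (e 3) - 1) *
        (lmon (e 4) - 1) * (lmon (e 0 + e 1 + e 2 + e 3 + e 4) - 1) *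
        (lmon (e 2 + e 3 + e 4) - 1)) ^ 2
    let Δ₂ : LaurentRing5 :=
      ((lmon (e 0) - 1) * (lmon (e 1) - 1) * (lmon (e 2) - 1) * (lmon (e 3) - 1)) ^ 2 *
        (lmon (e 4) - 1) ^ 3 * (lmon (e 0 + e 1 + e 2 + e 3 + e 4) - 1) *
        (lmon (e 2 + e 3 + e 4) - 1) * (lmon (e 0 + e 1 + e 4) - 1)
    ∀ (σ : (Fin 5 → ℤ) ≃+ (Fin 5 → ℤ)) (Φ : LaurentRing5 ≃ₐ[ℂ] LaurentRing5),
      (∀ a : Fin 5 → ℤ, Φ (lmon a) = lmon (σ a)) →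
      ∀ (c : ℂ), c ≠ 0 → ∀ a : Fin 5 → ℤ,
        Φ Δ₁ ≠ AddMonoidAlgebra.single a c * Δ₂ := by
  intro e Δ₁ Δ₂ σ Φ hΦ c hc a h
  have key : (Φ P1) ^ 2 = AddMonoidAlgebra.single a c * (A ^ 2 * p ^ 3 * B * C * D) := by
    rw [← map_pow]; exact h
  set Q := Φ P1 with hQdef
  set u : LaurentRing5 := AddMonoidAlgebra.single a c with hu
  have hU : ψ u ≠ 0 := by
    rw [hu, ψ_single]
    exact smul_ne_zero hc (single_ne_zero _ one_ne_zero)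
  have hpQ : p ∣ Q :=
    p_prime.dvd_of_dvd_pow (n := 2) ⟨u * (A ^ 2 * p ^ 2 * B * C * D), by rw [key]; ring⟩
  obtain ⟨q, hq⟩ := hpQ
  rw [hq] at key
  have h2 : q ^ 2 = u * (A ^ 2 * p * B * C * D) :=
    mul_left_cancel₀ (pow_ne_zero 2 p_ne_zero) (by linear_combination key)
  have hpq : p ∣ q :=
    p_prime.dvd_of_dvd_pow (n := 2) ⟨u * (A ^ 2 * B * C * D), by rw [h2]; ring⟩
  obtain ⟨r, hr⟩ := hpq
  rw [hr] at h2
  have h3 : p * r ^ 2 = u * (A ^ 2 * B * C * D) :=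
    mul_left_cancel₀ p_ne_zero (by linear_combination h2)
  have h4 : ψ (u * (A ^ 2 * B * C * D)) = 0 := by
    rw [← h3, map_mul, ψ_p, zero_mul]
  have h5 : ψ (u * (A ^ 2 * B * C * D)) ≠ 0 := by
    simp only [map_mul, map_pow]
    exact mul_ne_zero hU
      (mul_ne_zero (mul_ne_zero (mul_ne_zero (pow_ne_zero 2 hψA) hψB) hψC) hψD)
  exact h5 h4
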